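/- For the filter σ₂ ζ₂' = s − ζ₂, σ₁ ζ₁' = ζ₂ − ζ₁ with ramp input s(t) = a t + b (a, b ∈ ℝ, σ₁, σ₂ > 0), the output ζ := ζ₂ − ζ₁ converges to the constant a σ₁ as t → ∞. -/

import Mathlib

/-- If `σ x' = f - x` with `f → 0`, then `x → 0`. -/
lemma lowpass_decay (σ : ℝ) (hσ : 0 < σ) (f x : ℝ → ℝ)
    (hf : Filter.Tendsto f Filter.atTop (nhds 0))
    (hx : ∀ t, HasDerivAt x ((f t - x t) / σ) t) :
    Filter.Tendsto x Filter.atTop (nhds 0) := by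
  set g : ℝ → ℝ := fun t => x t * Real.exp (t / σ) with hg_def
  have hexp : ∀ t : ℝ, HasDerivAt (fun t : ℝ => Real.exp (t / σ))
      (Real.exp (t / σ) * (1 / σ)) t := by
    intro t
    exact (Real.hasDerivAt_exp (t / σ)).comp t ((hasDerivAt_id t).div_const σ)
  have hg : ∀ t, HasDerivAt g (f t / σ * Real.exp (t / σ)) t := by
    intro t
    have h1 := (hx t).mul (hexp t)
    refine h1.congr_deriv ?_
    field_simp
    ring
  rw [NormedAddCommGroup.tendsto_nhds_zero]
  intro ε hε
  obtain ⟨T, hT⟩ := Filter.eventually_atTop.mp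
    ((NormedAddCommGroup.tendsto_nhds_zero.mp hf) (ε / 2) (by positivity))
  set φ : ℝ → ℝ := fun t => (ε / 2) * Real.exp (t / σ) with hφ_def
  have hφ : ∀ t, HasDerivAt φ ((ε / 2) * (Real.exp (t / σ) * (1 / σ))) t :=
    fun t => (hexp t).const_mul (ε / 2)
  -- both φ - g and φ + g are monotone on [T, ∞)
  have hmono : ∀ c : ℝ, c = 1 ∨ c = -1 →
      MonotoneOn (fun t => φ t + c * g t) (Set.Ici T) := by
    intro c hc
    have hder : ∀ t, HasDerivAt (fun t => φ t + c * g t)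
        ((ε / 2) * (Real.exp (t / σ) * (1 / σ)) + c * (f t / σ * Real.exp (t / σ))) t :=
      fun t => (hφ t).add ((hg t).const_mul c)
    apply monotoneOn_of_deriv_nonneg (convex_Ici T)
    · exact Continuous.continuousOn
        (Differentiable.continuous fun t => (hder t).differentiableAt)
    · exact fun t _ => ((hder t).differentiableAt).differentiableWithinAt
    · intro t ht
      rw [interior_Ici] at ht
      rw [(hder t).deriv]
      have hft : |f t| < ε / 2 := by
        have := hT t (le_of_lt ht)
        simpa [Real.norm_eq_abs] using this
      have hfc : c * f t ≥ -(ε / 2) := by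
        rcases hc with h | h <;> subst h <;> cases abs_lt.mp hft <;> linarith
      have hepos : 0 < Real.exp (t / σ) := Real.exp_pos _
      have : (ε / 2) * (Real.exp (t / σ) * (1 / σ)) + c * (f t / σ * Real.exp (t / σ))
          = (Real.exp (t / σ) / σ) * (ε / 2 + c * f t) := by ring
      rw [this]
      have : 0 ≤ ε / 2 + c * f t := by linarith
      positivity
  -- hence |g t| ≤ |g T| + φ t for t ≥ T
  have hgbound : ∀ t ≥ T, |g t| ≤ |g T| + φ t := by
    intro t ht
    have h1 := hmono 1 (Or.inl rfl) (Set.self_mem_Ici) (Set.mem_Ici.mpr ht) ht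
    have h2 := hmono (-1) (Or.inr rfl) (Set.self_mem_Ici) (Set.mem_Ici.mpr ht) ht
    simp only [one_mul, neg_one_mul] at h1 h2
    have hneg := neg_abs_le (g T)
    have hle := le_abs_self (g T)
    have hφT : 0 ≤ φ T := by positivity
    rw [abs_le]
    constructor <;> linarith
  -- |x t| ≤ |g T| * exp (-t/σ) + ε/2
  have hxbound : ∀ t ≥ T, |x t| ≤ |g T| * Real.exp (-(t / σ)) + ε / 2 := by
    intro t ht
    have hepos : 0 < Real.exp (t / σ) := Real.exp_pos _
    have hmul : Real.exp (t / σ) * Real.exp (-(t / σ)) = 1 := by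
      rw [← Real.exp_add]; simp
    have hxg : x t = g t * Real.exp (-(t / σ)) := by
      have h3 : g t * Real.exp (-(t / σ)) = x t * (Real.exp (t / σ) * Real.exp (-(t / σ))) := by
        simp only [hg_def]; ring
      rw [h3, hmul, mul_one]
    rw [hxg, abs_mul, abs_of_pos (Real.exp_pos _)]
    have h1 := hgbound t ht
    have h2 : φ t * Real.exp (-(t / σ)) = ε / 2 := by
      have h4 : φ t * Real.exp (-(t / σ)) = (ε / 2) * (Real.exp (t / σ) * Real.exp (-(t / σ))) := by
        simp only [hφ_def]; ring
      rw [h4, hmul, mul_one]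
    nlinarith [Real.exp_pos (-(t / σ))]
  -- the exponential tail goes to 0
  have htail : Filter.Tendsto (fun t => |g T| * Real.exp (-(t / σ))) Filter.atTop (nhds 0) := by
    have h0 : Filter.Tendsto (fun t : ℝ => -(t / σ)) Filter.atTop Filter.atBot := by
      apply Filter.tendsto_neg_atBot_iff.mpr
      exact Filter.Tendsto.atTop_div_const hσ Filter.tendsto_id
    have := Real.tendsto_exp_atBot.comp h0
    simpa using this.const_mul |g T|
  have htail' : ∀ᶠ t in Filter.atTop, |g T| * Real.exp (-(t / σ)) < ε / 2 :=
    htail.eventually_lt_const (by positivity)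
  filter_upwards [Filter.eventually_ge_atTop T, htail'] with t ht h2
  have := hxbound t ht
  rw [Real.norm_eq_abs]
  linarith

/-- Band-pass filter with ramp input `s t = a t + b`: the output `ζ = ζ₂ - ζ₁`
converges to the constant `a σ₁` as `t → ∞`. -/
theorem bandpass_ramp_input_output
    (σ₁ σ₂ a b : ℝ) (h1 : 0 < σ₁) (h2 : 0 < σ₂)
    (ζ₁ ζ₂ : ℝ → ℝ)
    (hζ₂ : ∀ t, HasDerivAt ζ₂ (((a * t + b) - ζ₂ t) / σ₂) t)
    (hζ₁ : ∀ t, HasDerivAt ζ₁ ((ζ₂ t - ζ₁ t) / σ₁) t) :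
    Filter.Tendsto (fun t => ζ₂ t - ζ₁ t) Filter.atTop (nhds (a * σ₁)) := by
  set w : ℝ → ℝ := fun t => ζ₂ t - (a * t + b - a * σ₂) with hw_def
  have hw : ∀ t, HasDerivAt w (((fun _ : ℝ => (0:ℝ)) t - w t) / σ₂) t := by
    intro t
    have hlin : HasDerivAt (fun t : ℝ => a * t + b - a * σ₂) a t := by
      simpa using (((hasDerivAt_id t).const_mul a).add_const b).sub_const (a * σ₂)
    have := (hζ₂ t).sub hlin
    refine this.congr_deriv ?_
    field_simp
    ring
  have hwt : Filter.Tendsto w Filter.atTop (nhds 0) :=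
    lowpass_decay σ₂ h2 _ w (tendsto_const_nhds) hw
  set y : ℝ → ℝ := fun t => ζ₁ t - (a * t + b - a * σ₂ - a * σ₁) with hy_def
  have hy : ∀ t, HasDerivAt y ((w t - y t) / σ₁) t := by
    intro t
    have hlin : HasDerivAt (fun t : ℝ => a * t + b - a * σ₂ - a * σ₁) a t := by
      simpa using ((((hasDerivAt_id t).const_mul a).add_const b).sub_const (a * σ₂)).sub_const
        (a * σ₁)
    have := (hζ₁ t).sub hlin
    refine this.congr_deriv ?_
    simp only [hw_def, hy_def]
    field_simp
    ring
  have hyt : Filter.Tendsto y Filter.atTop (nhds 0) :=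
    lowpass_decay σ₁ h1 w y hwt hy
  have hfinal := (hwt.sub hyt).add_const (a * σ₁)
  rw [sub_zero, zero_add] at hfinal
  convert hfinal using 2 with t
  simp only [hw_def, hy_def]
  ring
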